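/- arXiv:2105.01719 — 2 statements merged into one kernel-verified Lean document; each statement's English description precedes it below -/
import Mathlib

section
/- Let T be a tree in ℕ^{<ℕ} and let G be the graph whose vertices are the nodes of T, with an edge between two nodes exactly when one is an immediate successor of the other (i.e., one extends the other by exactly one entry). Then the one-way infinite linear graph L (vertices w_0, w_1, ..., edges exactly (w_i, w_{i+1})) is isomorphic to a subgraph of G if and only if T has an infinite path. -/
private lemma ofFn_step (f : ℕ → ℕ) (n : ℕ) :
    (List.ofFn fun i : Fin (n + 1) => f i) = (List.ofFn fun i : Fin n => f i) ++ [f n] := by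
  rw [List.ofFn_succ']
  simp [List.concat_eq_append]

theorem stmt_8 (T : Set (List ℕ))
    (htree : ∀ σ τ : List ℕ, τ <+: σ → σ ∈ T → τ ∈ T) :
    -- the ray L embeds into the graph on the nodes of T whose edges join
    -- immediate successor pairs, iff T has an infinite path
    (∃ φ : ℕ → List ℕ, Function.Injective φ ∧ (∀ i : ℕ, φ i ∈ T) ∧
      ∀ i : ℕ, (∃ a : ℕ, φ (i + 1) = φ i ++ [a]) ∨ (∃ a : ℕ, φ i = φ (i + 1) ++ [a])) ↔
    (∃ f : ℕ → ℕ, ∀ n : ℕ, (List.ofFn fun i : Fin n => f i) ∈ T) := by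
  constructor
  · rintro ⟨φ, hinj, hmem, hstep⟩
    -- once a "down" step happens, all later steps are down
    have down_persists : ∀ i, (∃ a, φ (i + 1) = φ i ++ [a]) →
        ∀ k, ∃ a, φ (i + k + 1) = φ (i + k) ++ [a] := by
      intro i hi k
      induction k with
      | zero => exact hi
      | succ k ih =>
        rcases hstep (i + k + 1) with h | h
        · exact h
        · exfalso
          obtain ⟨a, ha⟩ := ih
          obtain ⟨b, hb⟩ := h
          have : φ (i + k + 1 + 1) ++ [b] = φ (i + k) ++ [a] := by rw [← hb, ha]
          have heq : φ (i + k + 1 + 1) = φ (i + k) := (List.append_inj' this rfl).1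
          have := hinj heq
          omega
    -- some down step must happen
    have exists_down : ∃ i, ∃ a, φ (i + 1) = φ i ++ [a] := by
      by_contra h'
      push_neg at h'
      have hup : ∀ i, ∃ a, φ i = φ (i + 1) ++ [a] := by
        intro i
        rcases hstep i with h | h
        · exact absurd h.choose_spec (h' i h.choose)
        · exact h
      have hlen : ∀ i, (φ 0).length = (φ i).length + i := by
        intro i
        induction i with
        | zero => rfl
        | succ i ih =>
          obtain ⟨a, ha⟩ := hup i
          rw [ih, ha]
          simp
          omega
      have := hlen ((φ 0).length + 1)
      omega
    obtain ⟨i₀, hd⟩ := exists_down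
    have D : ∀ k, ∃ a, φ (i₀ + k + 1) = φ (i₀ + k) ++ [a] := down_persists i₀ hd
    have hlen : ∀ k, (φ (i₀ + k)).length = (φ i₀).length + k := by
      intro k
      induction k with
      | zero => rfl
      | succ k ih =>
        obtain ⟨a, ha⟩ := D k
        have : i₀ + (k + 1) = i₀ + k + 1 := by omega
        rw [this, ha]
        simp [ih]
        omega
    refine ⟨fun n => (φ (i₀ + n + 1)).getD n 0, ?_⟩
    have key : ∀ n, (List.ofFn fun i : Fin n => (φ (i₀ + (i : ℕ) + 1)).getD (i : ℕ) 0)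
        = (φ (i₀ + n)).take n := by
      intro n
      induction n with
      | zero => simp
      | succ n ih =>
        rw [ofFn_step (fun m => (φ (i₀ + m + 1)).getD m 0) n, ih]
        obtain ⟨a, ha⟩ := D n
        have h1 : i₀ + (n + 1) = i₀ + n + 1 := by omega
        rw [h1, ha]
        have hl : n < (φ (i₀ + n) ++ [a]).length := by
          simp [hlen n]
        rw [List.take_succ]
        congr 1
        · rw [List.take_append_of_le_length]
          rw [hlen n]; omega
        · rw [List.getElem?_eq_getElem hl, List.getD_eq_getElem _ _ hl]
          rfl
    intro n
    rw [key n]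
    exact htree _ _ (List.take_prefix n _) (hmem _)
  · rintro ⟨f, hf⟩
    refine ⟨fun n => List.ofFn fun i : Fin n => f i, ?_, hf, ?_⟩
    · intro a b hab
      have := congrArg List.length hab
      simpa using this
    · intro i
      left
      exact ⟨f i, ofFn_step f i⟩
end

section
/- Let T_0, T_1, T_2, ... be a sequence of trees in ℕ^{<ℕ}. For each i, let G_i be the graph of T_i (vertices are nodes, edges between immediate successor pairs) with a cycle of length i+3 attached at the root node, and let G be the disjoint union of the G_i. Let L_n denote the one-way infinite linear graph with a cycle of length n+3 appended to its first vertex. Then for every n, L_n is isomorphic to a subgraph of G if and only if T_n has an infinite path. -/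
/-- Adjacency in the disjoint union `G` of the graphs `G_i`, where `G_i` is the
graph of the tree `T i` (vertices `(i, Sum.inl σ)` for `σ ∈ T i`, edges between
immediate successor pairs) with a cycle of length `i + 3` attached at the root:
the extra cycle vertices are `(i, Sum.inr c)` for `c < i + 2`, arranged in a path
`0, 1, ..., i + 1` whose two endpoints are joined to the root `(i, Sum.inl [])`. -/
def unionGraphAdj (T : ℕ → Set (List ℕ)) (x y : ℕ × (List ℕ ⊕ ℕ)) : Prop :=
  x.1 = y.1 ∧
    ((∃ σ τ : List ℕ, x.2 = Sum.inl σ ∧ y.2 = Sum.inl τ ∧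
        σ ∈ T x.1 ∧ τ ∈ T x.1 ∧ (∃ a : ℕ, τ = σ ++ [a] ∨ σ = τ ++ [a])) ∨
     (∃ c d : ℕ, x.2 = Sum.inr c ∧ y.2 = Sum.inr d ∧
        c < x.1 + 2 ∧ d < x.1 + 2 ∧ (c + 1 = d ∨ d + 1 = c)) ∨
     (∃ c : ℕ, c < x.1 + 2 ∧ (c = 0 ∨ c = x.1 + 1) ∧
        ((x.2 = Sum.inl ([] : List ℕ) ∧ y.2 = Sum.inr c) ∨
         (y.2 = Sum.inl ([] : List ℕ) ∧ x.2 = Sum.inr c))))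

/-- Adjacency in `L_n`: the ray on vertices `Sum.inl i`, with a cycle of length
`n + 3` appended at the first vertex `Sum.inl 0`, the extra cycle vertices being
`Sum.inr c` for `c : Fin (n + 2)`. -/
def lineWithCycleAdj (n : ℕ) (x y : ℕ ⊕ Fin (n + 2)) : Prop :=
  (∃ i : ℕ, (x = Sum.inl i ∧ y = Sum.inl (i + 1)) ∨
            (x = Sum.inl (i + 1) ∧ y = Sum.inl i)) ∨
  (∃ c d : Fin (n + 2), (c : ℕ) + 1 = (d : ℕ) ∧
    ((x = Sum.inr c ∧ y = Sum.inr d) ∨ (x = Sum.inr d ∧ y = Sum.inr c))) ∨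
  (∃ c : Fin (n + 2), ((c : ℕ) = 0 ∨ (c : ℕ) = n + 1) ∧
    ((x = Sum.inl 0 ∧ y = Sum.inr c) ∨ (x = Sum.inr c ∧ y = Sum.inl 0)))

lemma aux_mod_ne {m : ℕ} (a b : ℕ) (hb : 0 < b) (hbm : b < m) :
    a % m ≠ (a + b) % m := by
  intro h
  have h2 : a + 0 ≡ a + b [MOD m] := by simpa [Nat.ModEq] using h
  have h3 := Nat.ModEq.add_left_cancel' a h2
  have h4 : b % m = 0 := by simpa [Nat.ModEq] using h3.symm
  rw [Nat.mod_eq_of_lt hbm] at h4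
  omega

lemma aux_ofFn_concat (f : ℕ → ℕ) (j : ℕ) :
    (List.ofFn fun t : Fin (j+1) => f t) = (List.ofFn fun t : Fin j => f t) ++ [f j] := by
  rw [List.ofFn_succ']
  simp [List.concat_eq_append]

def iotaFn (n : ℕ) (j : ℕ) : ℕ ⊕ Fin (n + 2) :=
  if j % (n+3) = 0 then Sum.inl 0
  else Sum.inr ⟨j % (n+3) - 1, by have := Nat.mod_lt j (show 0 < n+3 by omega); omega⟩

lemma iota_period (n j : ℕ) : iotaFn n (j + (n+3)) = iotaFn n j := by
  simp [iotaFn, Nat.add_mod_right]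

lemma iota_mod (n j : ℕ) : iotaFn n (j % (n+3)) = iotaFn n j := by
  simp [iotaFn, Nat.mod_mod_of_dvd j (dvd_refl (n+3))]

lemma iota_inj {n j l : ℕ} (h : iotaFn n j = iotaFn n l) : j % (n+3) = l % (n+3) := by
  by_cases h1 : j % (n+3) = 0 <;> by_cases h2 : l % (n+3) = 0 <;>
    simp [iotaFn, h1, h2] at h ⊢ <;>
      (try omega) <;>
      (have hj := Nat.mod_lt j (show 0 < n+3 by omega);
       have hl := Nat.mod_lt l (show 0 < n+3 by omega); omega)

lemma iota_ne_inl_succ (n x j : ℕ) : iotaFn n x ≠ Sum.inl (j+1) := by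
  by_cases h1 : x % (n+3) = 0 <;> simp [iotaFn, h1]

lemma iota_adj (n j : ℕ) : lineWithCycleAdj n (iotaFn n j) (iotaFn n (j+1)) := by
  have hjm := Nat.mod_lt j (show 0 < n+3 by omega)
  have hsucc : (j+1) % (n+3) = (j % (n+3) + 1) % (n+3) := by
    conv_lhs => rw [Nat.add_mod]
    rw [Nat.mod_eq_of_lt (show 1 < n+3 by omega)]
  by_cases h0 : j % (n+3) = 0
  · have h1 : (j+1) % (n+3) = 1 := by
      rw [hsucc, h0, Nat.mod_eq_of_lt (by omega)]
    refine Or.inr (Or.inr ⟨⟨0, by omega⟩, Or.inl rfl, Or.inl ⟨?_, ?_⟩⟩)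
    · simp [iotaFn, h0]
    · simp [iotaFn, h1]
  · by_cases h2 : j % (n+3) = n + 2
    · have h1 : (j+1) % (n+3) = 0 := by
        rw [hsucc, h2, Nat.mod_self]
      refine Or.inr (Or.inr ⟨⟨n+1, by omega⟩, Or.inr rfl, Or.inr ⟨?_, ?_⟩⟩)
      · simp [iotaFn, h2]
      · simp [iotaFn, h1]
    · have h1 : (j+1) % (n+3) = j % (n+3) + 1 := by
        rw [hsucc, Nat.mod_eq_of_lt (by omega)]
      refine Or.inr (Or.inl ⟨⟨j % (n+3) - 1, by omega⟩, ⟨j % (n+3), by omega⟩,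
        by simp; omega, Or.inl ⟨?_, ?_⟩⟩)
      · simp [iotaFn, h0]
      · simp [iotaFn, h1]

theorem stmt_12 (T : ℕ → Set (List ℕ))
    (hroot : ∀ i : ℕ, ([] : List ℕ) ∈ T i)
    (htree : ∀ i : ℕ, ∀ σ τ : List ℕ, τ <+: σ → σ ∈ T i → τ ∈ T i) :
    ∀ n : ℕ,
      (∃ φ : (ℕ ⊕ Fin (n + 2)) → ℕ × (List ℕ ⊕ ℕ), Function.Injective φ ∧
        ∀ x y : ℕ ⊕ Fin (n + 2), lineWithCycleAdj n x y →
          unionGraphAdj T (φ x) (φ y)) ↔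
      (∃ f : ℕ → ℕ, ∀ m : ℕ, (List.ofFn fun i : Fin m => f i) ∈ T n) := by
  intro n
  constructor
  · rintro ⟨φ, hinj, hadj⟩
    classical
    obtain ⟨i, hi⟩ : ∃ i, (φ (Sum.inl 0 : ℕ ⊕ Fin (n+2))).1 = i := ⟨_, rfl⟩
    have hray1 : ∀ j : ℕ, lineWithCycleAdj n (Sum.inl j) (Sum.inl (j+1)) :=
      fun j => Or.inl ⟨j, Or.inl ⟨rfl, rfl⟩⟩
    have hedge : ∀ x y, lineWithCycleAdj n x y → (φ x).1 = (φ y).1 :=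
      fun x y h => (hadj x y h).1
    have hcw : ∀ j, (φ (iotaFn n j)).1 = i := by
      intro j
      induction j with
      | zero => simpa [iotaFn] using hi
      | succ j ih => rw [← hedge _ _ (iota_adj n j)]; exact ih
    have hcray : ∀ j : ℕ, (φ (Sum.inl j : ℕ ⊕ Fin (n+2))).1 = i := by
      intro j
      induction j with
      | zero => exact hi
      | succ j ih => rw [← hedge _ _ (hray1 j)]; exact ih
    have hwinj : ∀ j l, (φ (iotaFn n j)).2 = (φ (iotaFn n l)).2 →
        j % (n+3) = l % (n+3) := by
      intro j l h
      exact iota_inj (hinj (Prod.ext (by rw [hcw j, hcw l]) h))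
    have hWadj : ∀ j, unionGraphAdj T (φ (iotaFn n j)) (φ (iotaFn n (j+1))) :=
      fun j => hadj _ _ (iota_adj n j)
    obtain ⟨rnk, hrnkl, hrnkr⟩ : ∃ r : (List ℕ ⊕ ℕ) → ℕ,
        (∀ σ : List ℕ, r (Sum.inl σ) = i + 2 + σ.length) ∧ (∀ c : ℕ, r (Sum.inr c) = c) :=
      ⟨Sum.elim (fun σ => i + 2 + σ.length) (fun c => c), fun _ => rfl, fun _ => rfl⟩
    obtain ⟨k, -, hkmax0⟩ := Finset.exists_max_image (Finset.range (n+3))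
      (fun j => rnk ((φ (iotaFn n j)).2)) ⟨0, by simp⟩
    have hkmax : ∀ j, rnk ((φ (iotaFn n j)).2) ≤ rnk ((φ (iotaFn n k)).2) := by
      intro j
      have h1 : (φ (iotaFn n j)).2 = (φ (iotaFn n (j % (n+3)))).2 := by rw [iota_mod]
      rw [h1]
      exact hkmax0 _ (Finset.mem_range.mpr (Nat.mod_lt j (by omega)))
    have e1 : k + n + 2 + 1 = k + (n+3) := by omega
    have hAprev : unionGraphAdj T (φ (iotaFn n (k+n+2))) (φ (iotaFn n k)) := by
      have h := hWadj (k+n+2)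
      rw [e1, iota_period] at h
      exact h
    have hmodne12 : (φ (iotaFn n (k+1))).2 ≠ (φ (iotaFn n (k+n+2))).2 := by
      intro h
      exact aux_mod_ne (m := n+3) (k+1) (n+1) (by omega) (by omega)
        (by rw [show k+1+(n+1) = k+n+2 by omega]; exact hwinj _ _ h)
    -- the maximum-rank vertex on the cycle is the root
    have hmaxroot : (φ (iotaFn n k)).2 = Sum.inl ([] : List ℕ) := by
      rcases hv : (φ (iotaFn n k)).2 with σ | c
      · rcases σ with _ | ⟨s0, σ0⟩
        · rfl
        exfalso
        have hF := hWadj k; unfold unionGraphAdj at hF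
        obtain ⟨-, hcase⟩ := hF
        have hB := hAprev; unfold unionGraphAdj at hB
        obtain ⟨-, hcase'⟩ := hB
        have hfwd : ∃ τ a, (φ (iotaFn n (k+1))).2 = Sum.inl τ ∧ s0 :: σ0 = τ ++ [a] := by
          rcases hcase with ⟨σ', τ, hx, hy, -, -, a, hst | hst⟩ | ⟨c0, d0, hx, -⟩ |
              ⟨c0, -, -, ⟨hx, -⟩ | ⟨-, hx⟩⟩
          · exfalso
            rw [hv] at hx
            have hσ' : σ' = s0 :: σ0 := by simpa using hx.symm
            subst hσ'
            have hk1 := hkmax (k+1)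
            rw [hv, hy, hrnkl, hrnkl, hst] at hk1
            simp at hk1
          · rw [hv] at hx
            have hσ' : σ' = s0 :: σ0 := by simpa using hx.symm
            subst hσ'
            exact ⟨τ, a, hy, hst⟩
          · rw [hv] at hx; simp at hx
          · rw [hv] at hx; simp at hx
          · rw [hv] at hx; simp at hx
        have hbwd : ∃ τ b, (φ (iotaFn n (k+n+2))).2 = Sum.inl τ ∧ s0 :: σ0 = τ ++ [b] := by
          rcases hcase' with ⟨σ', τ, hx, hy, -, -, a, hst | hst⟩ | ⟨c0, d0, -, hy, -⟩ |
              ⟨c0, -, -, ⟨-, hy⟩ | ⟨hy, -⟩⟩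
          · rw [hv] at hy
            have hτ : τ = s0 :: σ0 := by simpa using hy.symm
            subst hτ
            exact ⟨σ', a, hx, hst⟩
          · exfalso
            rw [hv] at hy
            have hτ : τ = s0 :: σ0 := by simpa using hy.symm
            subst hτ
            have hk1 := hkmax (k+n+2)
            rw [hv, hx, hrnkl, hrnkl, hst] at hk1
            simp at hk1
          · rw [hv] at hy; simp at hy
          · rw [hv] at hy; simp at hy
          · rw [hv] at hy; simp at hy
        obtain ⟨τ, a, hy1, he1⟩ := hfwd
        obtain ⟨τ', b, hy2, he2⟩ := hbwd
        have : τ = τ' := (List.append_inj' (he1.symm.trans he2) rfl).1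
        exact hmodne12 (by rw [hy1, hy2, this])
      · exfalso
        have hF := hWadj k; unfold unionGraphAdj at hF
        obtain ⟨-, hcase⟩ := hF
        have hB := hAprev; unfold unionGraphAdj at hB
        obtain ⟨-, hcase'⟩ := hB
        have hfwd : ∃ d0, (φ (iotaFn n (k+1))).2 = Sum.inr d0 ∧ d0 + 1 = c := by
          rcases hcase with ⟨σ', τ, hx, -⟩ | ⟨c0, d0, hx, hy, hlt0, -, hst | hst⟩ |
              ⟨c0, hlt, -, ⟨hx, -⟩ | ⟨hy, hx⟩⟩
          · rw [hv] at hx; simp at hx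
          · exfalso
            rw [hv] at hx
            have hc0 : c0 = c := by simpa using hx.symm
            subst hc0
            have hk1 := hkmax (k+1)
            rw [hv, hy, hrnkr, hrnkr] at hk1
            omega
          · rw [hv] at hx
            have hc0 : c0 = c := by simpa using hx.symm
            subst hc0
            exact ⟨d0, hy, hst⟩
          · rw [hv] at hx; simp at hx
          · exfalso
            rw [hv] at hx
            have hc0 : c0 = c := by simpa using hx.symm
            subst hc0
            rw [hcw k] at hlt
            have hk1 := hkmax (k+1)
            rw [hv, hy, hrnkl, hrnkr] at hk1
            omega
        have hbwd : ∃ c0, (φ (iotaFn n (k+n+2))).2 = Sum.inr c0 ∧ c0 + 1 = c := by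
          rcases hcase' with ⟨σ', τ, -, hy, -⟩ | ⟨c0, d0, hx, hy, hlt0, -, hst | hst⟩ |
              ⟨c0, hlt, -, ⟨hx, hy⟩ | ⟨hy, -⟩⟩
          · rw [hv] at hy; simp at hy
          · rw [hv] at hy
            have hd0 : d0 = c := by simpa using hy.symm
            subst hd0
            exact ⟨c0, hx, hst⟩
          · exfalso
            rw [hv] at hy
            have hd0 : d0 = c := by simpa using hy.symm
            subst hd0
            have hk1 := hkmax (k+n+2)
            rw [hv, hx, hrnkr, hrnkr] at hk1
            omega
          · exfalso
            rw [hv] at hy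
            have hc0 : c0 = c := by simpa using hy.symm
            subst hc0
            rw [hcw (k+n+2)] at hlt
            have hk1 := hkmax (k+n+2)
            rw [hv, hx, hrnkl, hrnkr] at hk1
            omega
          · rw [hv] at hy; simp at hy
        obtain ⟨d0, hy1, he1'⟩ := hfwd
        obtain ⟨c0, hy2, he2'⟩ := hbwd
        have : d0 = c0 := by omega
        exact hmodne12 (by rw [hy1, hy2, this])
    -- the two neighbors of the root on the cycle
    have hnbr : ∃ c1 c2, (φ (iotaFn n (k+1))).2 = Sum.inr c1 ∧
        (φ (iotaFn n (k+n+2))).2 = Sum.inr c2 ∧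
        (c1 = 0 ∨ c1 = i+1) ∧ (c2 = 0 ∨ c2 = i+1) ∧ c1 ≠ c2 := by
      have hF := hWadj k; unfold unionGraphAdj at hF
      obtain ⟨-, hcase⟩ := hF
      have hB := hAprev; unfold unionGraphAdj at hB
      obtain ⟨-, hcase'⟩ := hB
      have hfwd : ∃ c1, (φ (iotaFn n (k+1))).2 = Sum.inr c1 ∧ (c1 = 0 ∨ c1 = i+1) := by
        rcases hcase with ⟨σ', τ, hx, hy, -, -, a, hst | hst⟩ | ⟨c0, d0, hx, -⟩ |
            ⟨c0, -, hor, ⟨hx, hy⟩ | ⟨-, hx⟩⟩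
        · exfalso
          rw [hmaxroot] at hx
          have hσ' : σ' = [] := by simpa using hx.symm
          subst hσ'
          have hk1 := hkmax (k+1)
          rw [hmaxroot, hy, hrnkl, hrnkl, hst] at hk1
          simp at hk1
        · exfalso
          rw [hmaxroot] at hx
          have hσ' : σ' = [] := by simpa using hx.symm
          subst hσ'
          simp at hst
        · rw [hmaxroot] at hx; simp at hx
        · rw [hcw k] at hor
          exact ⟨c0, hy, hor⟩
        · rw [hmaxroot] at hx; simp at hx
      have hbwd : ∃ c2, (φ (iotaFn n (k+n+2))).2 = Sum.inr c2 ∧ (c2 = 0 ∨ c2 = i+1) := by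
        rcases hcase' with ⟨σ', τ, hx, hy, -, -, a, hst | hst⟩ | ⟨c0, d0, -, hy, -⟩ |
            ⟨c0, -, hor, ⟨-, hy⟩ | ⟨hy, hx⟩⟩
        · exfalso
          rw [hmaxroot] at hy
          have hτ : τ = [] := by simpa using hy.symm
          subst hτ
          simp at hst
        · exfalso
          rw [hmaxroot] at hy
          have hτ : τ = [] := by simpa using hy.symm
          subst hτ
          have hk1 := hkmax (k+n+2)
          rw [hmaxroot, hx, hrnkl, hrnkl, hst] at hk1
          simp at hk1
        · rw [hmaxroot] at hy; simp at hy
        · rw [hmaxroot] at hy; simp at hy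
        · rw [hcw (k+n+2)] at hor
          exact ⟨c0, hx, hor⟩
      obtain ⟨c1, h1, hor1⟩ := hfwd
      obtain ⟨c2, h2, hor2⟩ := hbwd
      refine ⟨c1, c2, h1, h2, hor1, hor2, fun h => hmodne12 (by rw [h1, h2, h])⟩
    obtain ⟨c1, c2, hn1, hn2, hc1or, hc2or, hc12⟩ := hnbr
    -- the inner path of the cycle consists of `inr` vertices
    have hD : ∀ j : ℕ, ∃ e, j ≤ n+1 →
        ((φ (iotaFn n (k+1+j))).2 = Sum.inr e ∧ e < i + 2) := by
      intro j
      induction j with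
      | zero =>
        refine ⟨c1, fun _ => ⟨hn1, ?_⟩⟩
        have hF := hWadj (k+1); unfold unionGraphAdj at hF
        obtain ⟨-, hcase⟩ := hF
        rcases hcase with ⟨σ', τ, hx, -⟩ | ⟨c0, d0, hx, -, hlt, -⟩ |
            ⟨c0, hlt, -, ⟨hx, -⟩ | ⟨-, hx⟩⟩
        · rw [hn1] at hx; simp at hx
        · rw [hn1] at hx
          have : c0 = c1 := by simpa using hx.symm
          rw [hcw (k+1)] at hlt; omega
        · rw [hn1] at hx; simp at hx
        · rw [hn1] at hx
          have : c0 = c1 := by simpa using hx.symm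
          rw [hcw (k+1)] at hlt; omega
      | succ j ih =>
        obtain ⟨e, he⟩ := ih
        by_cases hj : j + 1 ≤ n + 1
        · obtain ⟨heq, helt⟩ := he (by omega)
          have hF := hWadj (k+1+j); unfold unionGraphAdj at hF
          obtain ⟨-, hcase⟩ := hF
          rcases hcase with ⟨σ', τ, hx, -⟩ | ⟨c0, d0, hx, hy, -, hlt, -⟩ |
              ⟨c0, hlt, -, ⟨hx, -⟩ | ⟨hy, hx⟩⟩
          · rw [heq] at hx; simp at hx
          · rw [hcw (k+1+j)] at hlt
            exact ⟨d0, fun _ => ⟨hy, hlt⟩⟩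
          · rw [heq] at hx; simp at hx
          · exfalso
            have : (φ (iotaFn n (k+1+j+1))).2 = (φ (iotaFn n k)).2 := by
              rw [hy, hmaxroot]
            have hmod := hwinj _ _ this
            exact aux_mod_ne (m := n+3) k (j+2) (by omega) (by omega)
              (by rw [show k+(j+2) = k+1+j+1 by omega]; exact hmod.symm)
        · exact ⟨0, fun h => absurd h hj⟩
    choose d hd using hD
    -- the steps of the inner path
    have hstepd : ∀ j, j ≤ n → (d j + 1 = d (j+1) ∨ d (j+1) + 1 = d j) := by
      intro j hj
      obtain ⟨h1, -⟩ := hd j (by omega)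
      obtain ⟨h2, -⟩ := hd (j+1) (by omega)
      have hF := hWadj (k+1+j); unfold unionGraphAdj at hF
      obtain ⟨-, hcase⟩ := hF
      have h2' : (φ (iotaFn n (k+1+j+1))).2 = Sum.inr (d (j+1)) := h2
      rcases hcase with ⟨σ', τ, hx, -⟩ | ⟨c0, d0, hx, hy, -, -, hst⟩ |
          ⟨c0, -, -, ⟨hx, -⟩ | ⟨hy, -⟩⟩
      · rw [h1] at hx; simp at hx
      · rw [h1] at hx
        rw [h2'] at hy
        have hc0 : c0 = d j := by simpa using hx.symm
        have hd0 : d0 = d (j+1) := by simpa using hy.symm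
        subst hc0; subst hd0
        exact hst
      · rw [h1] at hx; simp at hx
      · rw [h2'] at hy; simp at hy
    have hdinj : ∀ j, j ≤ n+1 → ∀ j', j' ≤ n+1 → d j = d j' → j = j' := by
      intro j hj j' hj' h
      have h1 := hwinj (k+1+j) (k+1+j') (by rw [(hd j hj).1, (hd j' hj').1, h])
      have h2 : j ≡ j' [MOD n+3] := Nat.ModEq.add_left_cancel' (k+1) h1
      have h3 : j % (n+3) = j' % (n+3) := h2
      rw [Nat.mod_eq_of_lt (by omega), Nat.mod_eq_of_lt (by omega)] at h3
      exact h3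
    have hd0 : d 0 = c1 := by
      have := (hd 0 (by omega)).1
      rw [hn1] at this
      simpa using this.symm
    have hdend : d (n+1) = c2 := by
      have := (hd (n+1) le_rfl).1
      rw [show k+1+(n+1) = k+n+2 by omega, hn2] at this
      simpa using this.symm
    have hA1 : ∀ j, j ≤ n+1 → d j ≤ d 0 + j := by
      intro j
      induction j with
      | zero => simp
      | succ j ih =>
        intro hj
        have h1 := ih (by omega)
        rcases hstepd j (by omega) with h | h <;> omega
    have hA2 : ∀ j, j ≤ n+1 → d 0 ≤ d j + j := by
      intro j
      induction j with
      | zero => simp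
      | succ j ih =>
        intro hj
        have h1 := ih (by omega)
        rcases hstepd j (by omega) with h | h <;> omega
    have hile : i ≤ n := by
      rcases hc1or with h1 | h1 <;> rcases hc2or with h2 | h2
      · omega
      · have := hA1 (n+1) le_rfl; omega
      · have := hA2 (n+1) le_rfl; omega
      · omega
    have hnle : n ≤ i := by
      have hcard := Finset.card_le_card_of_injOn d
        (fun a ha => Finset.mem_range.mpr
          (by have := (hd a (by simpa using Nat.lt_succ_iff.mp (Finset.mem_range.mp ha))).2; omega))
        (fun a ha b hb h => hdinj a (by simpa using Nat.lt_succ_iff.mp (Finset.mem_range.mp ha))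
          b (by simpa using Nat.lt_succ_iff.mp (Finset.mem_range.mp hb)) h)
        (s := Finset.range (n+2)) (t := Finset.range (i+2))
      simp at hcard
      omega
    have hin : i = n := by omega
    -- surjectivity of the inner path onto all cycle positions
    have hinjOn : Set.InjOn d (Finset.range (n+2)) := fun a ha b hb h =>
      hdinj a (by simpa using Nat.lt_succ_iff.mp (Finset.mem_range.mp ha))
        b (by simpa using Nat.lt_succ_iff.mp (Finset.mem_range.mp hb)) h
    have hsurj : ∀ e, e < n+2 → ∃ j, j ≤ n+1 ∧ d j = e := by
      intro e he
      have himg : Finset.image d (Finset.range (n+2)) = Finset.range (n+2) := by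
        apply Finset.eq_of_subset_of_card_le
        · intro x hx
          obtain ⟨a, ha, rfl⟩ := Finset.mem_image.mp hx
          have ha' := Finset.mem_range.mp ha
          have := (hd a (by omega)).2
          exact Finset.mem_range.mpr (by omega)
        · rw [Finset.card_image_of_injOn hinjOn]
      have he' : e ∈ Finset.image d (Finset.range (n+2)) := by
        rw [himg]; exact Finset.mem_range.mpr he
      obtain ⟨j, hj, hdj⟩ := Finset.mem_image.mp he'
      exact ⟨j, by have := Finset.mem_range.mp hj; omega, hdj⟩
    have hvals : ∀ e, e < n+2 → ∃ x, (φ (iotaFn n x)).2 = Sum.inr e := by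
      intro e he
      obtain ⟨j, hj, hdj⟩ := hsurj e he
      exact ⟨k+1+j, by rw [(hd j hj).1, hdj]⟩
    have hneq : ∀ x (j : ℕ), φ (iotaFn n x) ≠ φ (Sum.inl (j+1) : ℕ ⊕ Fin (n+2)) :=
      fun x j h => iota_ne_inl_succ n x j (hinj h)
    -- classification of cycle vertices
    have hclass : ∀ x, (φ (iotaFn n x)).2 = Sum.inl ([] : List ℕ) ∨
        ∃ e, e < n + 2 ∧ (φ (iotaFn n x)).2 = Sum.inr e := by
      intro x
      rcases hvx : (φ (iotaFn n x)).2 with σ | e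
      · left
        have hk1 := hkmax x
        rw [hvx, hmaxroot, hrnkl, hrnkl] at hk1
        simp only [List.length_nil] at hk1
        have hlen : σ.length = 0 := by omega
        simp [List.length_eq_zero_iff.mp hlen]
      · right
        have hF := hWadj x; unfold unionGraphAdj at hF
        obtain ⟨-, hcase⟩ := hF
        rcases hcase with ⟨σ', τ, hx, -⟩ | ⟨c0, d0, hx, -, hlt, -, -⟩ |
            ⟨c0, hlt, -, ⟨hx, -⟩ | ⟨-, hx⟩⟩
        · rw [hvx] at hx; simp at hx
        · rw [hvx] at hx
          have : c0 = e := by simpa using hx.symm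
          rw [hcw x] at hlt
          exact ⟨e, by omega, rfl⟩
        · rw [hvx] at hx; simp at hx
        · rw [hvx] at hx
          have : c0 = e := by simpa using hx.symm
          rw [hcw x] at hlt
          exact ⟨e, by omega, rfl⟩
    -- the start of the ray is the root
    have hzero : (φ (Sum.inl 0 : ℕ ⊕ Fin (n+2))).2 = Sum.inl ([] : List ℕ) := by
      have hiz : iotaFn n 0 = (Sum.inl 0 : ℕ ⊕ Fin (n+2)) := by simp [iotaFn]
      rcases hclass 0 with h | ⟨e, he, h⟩
      · rwa [hiz] at h
      · exfalso
        rw [hiz] at h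
        have hF := hadj _ _ (hray1 0); unfold unionGraphAdj at hF
        obtain ⟨-, hcase⟩ := hF
        rcases hcase with ⟨σ', τ, hx, -⟩ | ⟨c0, d0, hx, hy, -, hlt, -⟩ |
            ⟨c0, hlt, -, ⟨hx, -⟩ | ⟨hy, hx⟩⟩
        · rw [h] at hx; simp at hx
        · rw [hcray 0] at hlt
          obtain ⟨x0, hx0⟩ := hvals d0 (by omega)
          exact hneq x0 0 (Prod.ext (by rw [hcw, hcray]) (by rw [hx0, hy]))
        · rw [h] at hx; simp at hx
        · exact hneq k 0 (Prod.ext (by rw [hcw, hcray]) (by rw [hmaxroot, hy]))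
    -- the ray always moves to a child
    have hup : ∀ (j : ℕ) (σ : List ℕ), (φ (Sum.inl j : ℕ ⊕ Fin (n+2))).2 = Sum.inl σ →
        (∀ b ρ, σ = ρ ++ [b] → (φ (Sum.inl (j+1) : ℕ ⊕ Fin (n+2))).2 ≠ Sum.inl ρ) →
        ∃ a, (φ (Sum.inl (j+1) : ℕ ⊕ Fin (n+2))).2 = Sum.inl (σ ++ [a]) ∧
          σ ++ [a] ∈ T n ∧ σ ∈ T n := by
      intro j σ hσ hnp
      have hF := hadj _ _ (hray1 j); unfold unionGraphAdj at hF
      obtain ⟨-, hcase⟩ := hF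
      rcases hcase with ⟨σ', τ, hx, hy, hσT, hτT, a, hst | hst⟩ | ⟨c0, d0, hx, -⟩ |
          ⟨c0, hlt, -, ⟨-, hy⟩ | ⟨-, hx⟩⟩
      · rw [hσ] at hx
        have hσ' : σ' = σ := by simpa using hx.symm
        subst hσ'
        rw [hcray j, hin] at hσT hτT
        exact ⟨a, by rw [hy, hst], by rw [← hst]; exact hτT, hσT⟩
      · rw [hσ] at hx
        have hσ' : σ' = σ := by simpa using hx.symm
        subst hσ'
        exact absurd hy (hnp a τ hst)
      · rw [hσ] at hx; simp at hx
      · exfalso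
        rw [hcray j] at hlt
        obtain ⟨x0, hx0⟩ := hvals c0 (by omega)
        exact hneq x0 j (Prod.ext (by rw [hcw, hcray]) (by rw [hx0, hy]))
      · rw [hσ] at hx; simp at hx
    have hseq : ∀ j : ℕ, ∃ σ a, (φ (Sum.inl j : ℕ ⊕ Fin (n+2))).2 = Sum.inl σ ∧
        (φ (Sum.inl (j+1) : ℕ ⊕ Fin (n+2))).2 = Sum.inl (σ ++ [a]) ∧
        σ ∈ T n ∧ σ ++ [a] ∈ T n ∧ σ.length = j := by
      intro j
      induction j with
      | zero =>
        obtain ⟨a, h1, h2, h3⟩ := hup 0 [] hzero (fun b ρ h => by simp at h)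
        exact ⟨[], a, hzero, h1, h3, h2, rfl⟩
      | succ j ih =>
        obtain ⟨σ, a, hj, hj1, hσ, hσa, hlen⟩ := ih
        have hpar : ∀ b ρ, σ ++ [a] = ρ ++ [b] →
            (φ (Sum.inl (j+1+1) : ℕ ⊕ Fin (n+2))).2 ≠ Sum.inl ρ := by
          intro b ρ h heq
          obtain ⟨hρ, -⟩ := List.append_inj' h rfl
          have hfeq : φ (Sum.inl (j+1+1) : ℕ ⊕ Fin (n+2)) = φ (Sum.inl j) :=
            Prod.ext (by rw [hcray, hcray]) (by rw [heq, hj, hρ])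
          have h5 : j+1+1 = j := by simpa using hinj hfeq
          omega
        obtain ⟨b, h1, h2, h3⟩ := hup (j+1) (σ ++ [a]) hj1 hpar
        exact ⟨σ ++ [a], b, hj1, h1, hσa, h2, by simp [hlen]⟩
    choose σs fs h1 h2 h3 h4 h5 using hseq
    have hσs0 : σs 0 = [] := List.length_eq_zero_iff.mp (h5 0)
    have hsucc : ∀ j, σs (j+1) = σs j ++ [fs j] := by
      intro j
      have h := h2 j
      rw [h1 (j+1)] at h
      exact Sum.inl.inj h
    refine ⟨fs, fun m => ?_⟩
    have hof : ∀ j, σs j = List.ofFn fun t : Fin j => fs t := by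
      intro j
      induction j with
      | zero => simpa using hσs0
      | succ j ih => rw [hsucc j, ih, aux_ofFn_concat]
    rw [← hof m]
    exact h3 m



  · rintro ⟨f, hf⟩
    refine ⟨fun v => match v with
      | Sum.inl j => (n, Sum.inl (List.ofFn fun t : Fin j => f t))
      | Sum.inr c => (n, Sum.inr c.val), ?_, ?_⟩
    · intro x y hxy
      match x, y with
      | Sum.inl j, Sum.inl j' =>
        simp only [Prod.mk.injEq, Sum.inl.injEq, true_and] at hxy
        have := congrArg List.length hxy
        simp at this
        simp [this]
      | Sum.inl j, Sum.inr c => simp at hxy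
      | Sum.inr c, Sum.inl j => simp at hxy
      | Sum.inr c, Sum.inr c' =>
        simp only [Prod.mk.injEq, Sum.inr.injEq, true_and] at hxy
        simp [Fin.ext_iff, hxy]
    · intro x y hxy
      rcases hxy with ⟨i0, hc | hc⟩ | ⟨c, d, hcd, hc | hc⟩ | ⟨c, hc0, hc | hc⟩ <;>
        obtain ⟨hx, hy⟩ := hc <;> subst hx <;> subst hy <;> unfold unionGraphAdj
      · exact ⟨rfl, Or.inl ⟨_, _, rfl, rfl, hf i0, hf (i0+1), f i0,
          Or.inl (aux_ofFn_concat f i0)⟩⟩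
      · exact ⟨rfl, Or.inl ⟨_, _, rfl, rfl, hf (i0+1), hf i0, f i0,
          Or.inr (aux_ofFn_concat f i0)⟩⟩
      · exact ⟨rfl, Or.inr (Or.inl ⟨c.val, d.val, rfl, rfl, c.isLt, d.isLt, Or.inl hcd⟩)⟩
      · exact ⟨rfl, Or.inr (Or.inl ⟨d.val, c.val, rfl, rfl, d.isLt, c.isLt, Or.inr hcd⟩)⟩
      · exact ⟨rfl, Or.inr (Or.inr ⟨c.val, c.isLt, hc0, Or.inl ⟨by simp, rfl⟩⟩)⟩
      · exact ⟨rfl, Or.inr (Or.inr ⟨c.val, c.isLt, hc0, Or.inr ⟨by simp, rfl⟩⟩)⟩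
end
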